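/- Let E be a real normed vector space, C ⊆ E a nonempty compact convex set, f : E → ℝ, Δ : E → E → ℝ, C_f ≥ 0 such that Δ satisfies the curvature bound C_f for f on C, and ε ≥ 0. Let a : ℕ → ℝ with a_t > 0 for all t, A_t = ∑_{i=0}^t a_i, and α_t = a_t/A_t. Let x, v : ℕ → E with x_0 ∈ C, v_t ∈ C, and x_{t+1} = (1 − α_t)·x_t + α_t·v_t for all t. Define L_t = (1/A_t)·∑_{i=0}^t a_i·[ f(x_i) + Δ x_i (α_i·(v_i − x_i))/α_i − (α_i/2)·C_f·(1+ε) ] and G_t = f(x_{t+1}) − L_t. Then A_0·G_0 ≤ (a_0²/A_0)·C_f·(1+ε), and for all t ≥ 1, A_t·G_t − A_{t−1}·G_{t−1} ≤ (a_t²/A_t)·C_f·(1+ε). -/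

import Mathlib

/-- ADGT one-step inequality for relaxed vanilla ASFW: with weights `a t > 0`,
`A t = ∑_{i=0}^t a i`, `α t = a t / A t`, lower bound estimate `L` and gap
`G t = f (x (t+1)) - L t`, one has `A 0 * G 0 ≤ (a 0² / A 0) * Cf * (1+ε)` and
`A t * G t - A (t-1) * G (t-1) ≤ (a t² / A t) * Cf * (1+ε)` for `t ≥ 1`. -/
theorem adgt_one_step_vanilla
    {E : Type*} [NormedAddCommGroup E] [NormedSpace ℝ E]
    (C : Set E) (hCne : C.Nonempty) (hCcomp : IsCompact C) (hCconv : Convex ℝ C)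
    (f : E → ℝ)
    (Δ : E → E → ℝ) (Cf : ℝ) (hCf : 0 ≤ Cf)
    (hcurv : ∀ x ∈ C, ∀ v ∈ C, ∀ α ∈ Set.Ioc (0:ℝ) 1,
      |f (x + α • (v - x)) - f x - Δ x (α • (v - x))| ≤ α ^ 2 / 2 * Cf)
    (ε : ℝ) (hε : 0 ≤ ε)
    (a A α : ℕ → ℝ) (ha : ∀ t, 0 < a t)
    (hA : ∀ t : ℕ, A t = ∑ i ∈ Finset.range (t + 1), a i)
    (hα : ∀ t : ℕ, α t = a t / A t)
    (x v : ℕ → E) (hx0 : x 0 ∈ C) (hv : ∀ t, v t ∈ C)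
    (hstep : ∀ t : ℕ, x (t + 1) = (1 - α t) • x t + α t • v t)
    (L G : ℕ → ℝ)
    (hL : ∀ t : ℕ, L t = (1 / A t) * ∑ i ∈ Finset.range (t + 1),
      a i * (f (x i) + Δ (x i) (α i • (v i - x i)) / α i - α i / 2 * Cf * (1 + ε)))
    (hG : ∀ t : ℕ, G t = f (x (t + 1)) - L t) :
    A 0 * G 0 ≤ a 0 ^ 2 / A 0 * Cf * (1 + ε) ∧
      ∀ t : ℕ, 1 ≤ t →
        A t * G t - A (t - 1) * G (t - 1) ≤ a t ^ 2 / A t * Cf * (1 + ε) := by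

  have hApos : ∀ t, 0 < A t := fun t => by
    rw [hA]
    exact Finset.sum_pos (fun i _ => ha i) ⟨t, Finset.self_mem_range_succ t⟩
  have haA : ∀ t, a t ≤ A t := fun t => by
    rw [hA]
    exact Finset.single_le_sum (f := a) (fun i _ => (ha i).le)
      (Finset.self_mem_range_succ t)
  have hαpos : ∀ t, 0 < α t := fun t => by
    rw [hα]; exact div_pos (ha t) (hApos t)
  have hαle : ∀ t, α t ≤ 1 := fun t => by
    rw [hα]; exact div_le_one_of_le₀ (haA t) (hApos t).le
  have hxC : ∀ t, x t ∈ C := by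
    intro t
    induction t with
    | zero => exact hx0
    | succ s ih =>
      rw [hstep]
      exact hCconv ih (hv s) (by linarith [hαpos s, hαle s]) (hαpos s).le (by ring)
  have hstep' : ∀ t, x (t + 1) = x t + α t • (v t - x t) := fun t => by
    rw [hstep]; module
  have hkey : ∀ t, f (x (t + 1)) - f (x t) - Δ (x t) (α t • (v t - x t)) ≤
      α t ^ 2 / 2 * Cf := by
    intro t
    have h := hcurv (x t) (hxC t) (v t) (hv t) (α t) ⟨hαpos t, hαle t⟩
    rw [← hstep'] at h
    exact le_of_abs_le h
  have hAL : ∀ t, A t * L t = ∑ i ∈ Finset.range (t + 1),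
      a i * (f (x i) + Δ (x i) (α i • (v i - x i)) / α i - α i / 2 * Cf * (1 + ε)) :=
    fun t => by rw [hL, ← mul_assoc, mul_one_div, div_self (hApos t).ne', one_mul]
  have hAα : ∀ t, A t * α t = a t := fun t => by
    rw [hα]; field_simp [(hApos t).ne']
  have hsq : ∀ t, a t ^ 2 / A t = a t * α t := fun t => by
    rw [hα]; field_simp
  constructor
  · have hA0 : A 0 = a 0 := by rw [hA]; simp
    have hα0 : α 0 = 1 := by rw [hα, hA0, div_self (ha 0).ne']
    have hk := hkey 0
    have hG0 : A 0 * G 0 = a 0 * (f (x 1) - f (x 0) - Δ (x 0) (α 0 • (v 0 - x 0)))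
        + a 0 * (α 0 / 2 * Cf * (1 + ε)) := by
      rw [hG, mul_sub, hAL 0, Finset.sum_range_one, hA0, hα0]
      field_simp
      ring
    have hrhs : a 0 ^ 2 / A 0 * Cf * (1 + ε) = a 0 * Cf * (1 + ε) := by
      rw [hA0, sq, mul_div_cancel_right₀ _ (ha 0).ne']
    rw [hG0, hrhs, hα0] at *
    have h1 : a 0 * (f (x 1) - f (x 0) - Δ (x 0) ((1:ℝ) • (v 0 - x 0))) ≤
        a 0 * ((1:ℝ) ^ 2 / 2 * Cf) :=
      mul_le_mul_of_nonneg_left hk (ha 0).le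
    nlinarith [mul_nonneg (mul_nonneg (ha 0).le hCf) hε]
  · intro t ht
    obtain ⟨s, rfl⟩ : ∃ s, t = s + 1 := ⟨t - 1, (Nat.succ_pred_eq_of_pos ht).symm⟩
    have hts : s + 1 - 1 = s := rfl
    rw [hts]
    have hAsucc : A (s + 1) = A s + a (s + 1) := by
      rw [hA, hA, Finset.sum_range_succ]
    have hDiv : a (s + 1) * (Δ (x (s + 1)) (α (s + 1) • (v (s + 1) - x (s + 1))) / α (s + 1))
        = A (s + 1) * Δ (x (s + 1)) (α (s + 1) • (v (s + 1) - x (s + 1))) := by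
      rw [hα]
      field_simp [(ha (s+1)).ne', (hApos (s+1)).ne']
    have hdiff : A (s + 1) * G (s + 1) - A s * G s
        = A (s + 1) * (f (x (s + 2)) - f (x (s + 1))
            - Δ (x (s + 1)) (α (s + 1) • (v (s + 1) - x (s + 1))))
          + a (s + 1) * (α (s + 1) / 2 * Cf * (1 + ε)) := by
      rw [hG, hG, mul_sub, mul_sub, hAL, hAL, Finset.sum_range_succ _ (s + 1)]
      have := hDiv
      rw [hAsucc] at this ⊢
      nlinarith [this]
    have hk := hkey (s + 1)
    have h1 : A (s + 1) * (f (x (s + 2)) - f (x (s + 1))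
          - Δ (x (s + 1)) (α (s + 1) • (v (s + 1) - x (s + 1))))
        ≤ A (s + 1) * (α (s + 1) ^ 2 / 2 * Cf) :=
      mul_le_mul_of_nonneg_left hk (hApos (s + 1)).le
    have h2 : A (s + 1) * (α (s + 1) ^ 2 / 2 * Cf) = a (s + 1) * (α (s + 1) / 2 * Cf) := by
      rw [← hAα (s + 1)]; ring
    rw [hdiff, hsq]
    nlinarith [mul_nonneg (mul_nonneg (mul_nonneg (ha (s+1)).le (hαpos (s+1)).le) hCf) hε, h1, h2]
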